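/- Let d_{a,i} denote the coefficient of q^i in the Gaussian binomial coefficient (a+4 choose 4)_q, and let f(a,0) = d_{a,2a} - d_{a,2a-1}. Then f(a,0) = ⌊(a + 3δ)/6⌋, where δ = 1 if a is odd and δ = 2 if a is even. In particular, f(a,0) → ∞ as a → ∞. -/

import Mathlib

/-- `μ` is a partition with distinct parts (strictly decreasing positive parts,
followed by a tail of zeros), encoded as a function `Fin b → ℕ`. -/
def DistinctParts {b : ℕ} (μ : Fin b → ℕ) : Prop :=
  ∀ i j : Fin b, i < j → μ j = 0 ∨ μ j < μ i

/-- `μ` is a partition with distinct parts contained inside the shifted shape `lam`. -/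
def FitsD {b : ℕ} (lam μ : Fin b → ℕ) : Prop :=
  DistinctParts μ ∧ ∀ i, μ i ≤ lam i

/-- The coefficient of `q^k` in the rank-generating function `F_lam`:
the number of partitions with distinct parts of size `k` contained inside `lam`. -/
noncomputable def Fcoeff {b : ℕ} (lam : Fin b → ℕ) (k : ℕ) : ℕ :=
  Nat.card {μ : Fin b → ℕ // FitsD lam μ ∧ ∑ i, μ i = k}

/-- The coefficient of `q^k` in the rank-generating function `G_lam` of arbitrary
partitions contained inside the straight Ferrers shape `lam`. -/
noncomputable def Gcoeff {b : ℕ} (lam : Fin b → ℕ) (k : ℕ) : ℕ :=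
  Nat.card {μ : Fin b → ℕ // Antitone μ ∧ (∀ i, μ i ≤ lam i) ∧ ∑ i, μ i = k}

/-- The coefficient of `q^i` in the Gaussian binomial coefficient `(m choose k)_q`,
which is the rank-generating function of partitions inside a `k × (m-k)` rectangle. -/
noncomputable def gaussCoeff (m k i : ℕ) : ℕ :=
  Gcoeff (fun _ : Fin k => m - k) i

/-- `dZ a i` is the coefficient of `q^i` in `(a+4 choose 4)_q`, with value `0` for `i < 0`. -/
noncomputable def dZ (a : ℕ) (i : ℤ) : ℕ :=
  if 0 ≤ i then gaussCoeff (a + 4) 4 i.toNat else 0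

open Finset

/-- Box of triples. -/
def tbox (a : ℕ) : Finset (ℕ × ℕ × ℕ) :=
  Finset.range (a+1) ×ˢ Finset.range (a+1) ×ˢ Finset.range (a+1)

lemma mem_tbox {a : ℕ} {p : ℕ × ℕ × ℕ} :
    p ∈ tbox a ↔ p.1 ≤ a ∧ p.2.1 ≤ a ∧ p.2.2 ≤ a := by
  simp [tbox, Nat.lt_succ_iff]

/-- The key reduction: partitions in a `4 × a` box with sum `k` correspond to
difference vectors. -/
lemma gcoeff_eq (a k : ℕ) :
    Gcoeff (fun _ : Fin 4 => a) k =
    ((tbox a).filter (fun p =>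
      2*p.1+3*p.2.1+4*p.2.2 ≤ k ∧ k ≤ p.1+2*p.2.1+3*p.2.2 + a)).card := by
  rw [Gcoeff, ← Nat.card_eq_finsetCard]
  apply Nat.card_congr
  refine
    { toFun := fun μ => ⟨(μ.1 1 - μ.1 2, μ.1 2 - μ.1 3, μ.1 3), ?_⟩
      invFun := fun p =>
        ⟨![k - (p.1.1 + 2*p.1.2.1 + 3*p.1.2.2),
           p.1.1 + p.1.2.1 + p.1.2.2, p.1.2.1 + p.1.2.2, p.1.2.2], ?_⟩
      left_inv := ?_
      right_inv := ?_ }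
  · obtain ⟨μ, hA, hle, hsum⟩ := μ
    have h01 : μ 1 ≤ μ 0 := hA (by decide : (0:Fin 4) ≤ 1)
    have h12 : μ 2 ≤ μ 1 := hA (by decide : (1:Fin 4) ≤ 2)
    have h23 : μ 3 ≤ μ 2 := hA (by decide : (2:Fin 4) ≤ 3)
    have h0 := hle 0
    rw [Fin.sum_univ_four] at hsum
    simp only [mem_filter, mem_tbox]
    omega
  · obtain ⟨⟨x, y, z⟩, hp⟩ := p
    simp only [mem_filter, mem_tbox] at hp
    obtain ⟨⟨hx, hy, hz⟩, h1, h2⟩ := hp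
    refine ⟨?_, ?_, ?_⟩
    · intro i j hij
      fin_cases i <;> fin_cases j <;>
        simp_all [Fin.le_def, Matrix.cons_val_zero, Matrix.cons_val_one] <;> omega
    · intro i
      fin_cases i <;>
        simp [Matrix.cons_val_zero, Matrix.cons_val_one] <;> omega
    · rw [Fin.sum_univ_four]
      simp only [Matrix.cons_val_zero, Matrix.cons_val_one, Matrix.head_cons,
        Matrix.cons_val_two, Matrix.tail_cons, Matrix.cons_val_three]
      omega
  · rintro ⟨μ, hA, hle, hsum⟩
    have h01 : μ 1 ≤ μ 0 := hA (by decide : (0:Fin 4) ≤ 1)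
    have h12 : μ 2 ≤ μ 1 := hA (by decide : (1:Fin 4) ≤ 2)
    have h23 : μ 3 ≤ μ 2 := hA (by decide : (2:Fin 4) ≤ 3)
    rw [Fin.sum_univ_four] at hsum
    ext i
    fin_cases i <;>
      simp [Matrix.cons_val_zero, Matrix.cons_val_one] <;> omega
  · rintro ⟨⟨x, y, z⟩, hp⟩
    simp only [mem_filter, mem_tbox] at hp
    ext <;> simp <;> omega

/-- Common part. -/
def Cset (a : ℕ) : Finset (ℕ × ℕ × ℕ) :=
  (tbox a).filter (fun p =>
    a ≤ p.1+2*p.2.1+3*p.2.2 ∧ 2*p.1+3*p.2.1+4*p.2.2 + 1 ≤ 2*a)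

/-- Solutions of `x + 2y + 3z = n`. -/
def Pset (n : ℕ) : Finset (ℕ × ℕ × ℕ) :=
  (tbox n).filter (fun p => p.1+2*p.2.1+3*p.2.2 = n)

/-- Solutions of `2y + 3z = a`. -/
def Rset (a : ℕ) : Finset (ℕ × ℕ) :=
  (Finset.range (a+1) ×ˢ Finset.range (a+1)).filter (fun p => 2*p.1+3*p.2 = a)

lemma top_card (a : ℕ) :
    ((tbox a).filter (fun p => 2*p.1+3*p.2.1+4*p.2.2 = 2*a)).card = (Pset a).card := by
  apply Finset.card_nbij' (fun p => (p.1, p.2.2, p.2.1/2))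
    (fun p => (p.1, 2*p.2.2, p.2.1))
  · rintro ⟨x, y, z⟩ hp
    simp only [mem_coe, mem_filter, mem_tbox, Pset] at hp ⊢
    omega
  · rintro ⟨x, y, z⟩ hp
    simp only [mem_coe, mem_filter, mem_tbox, Pset] at hp ⊢
    omega
  · rintro ⟨x, y, z⟩ hp
    simp only [mem_coe, mem_filter, mem_tbox] at hp
    simp only [Prod.mk.injEq, true_and, and_true]
    omega
  · rintro ⟨x, y, z⟩ hp
    simp only [mem_coe, Pset, mem_filter, mem_tbox] at hp
    simp only [Prod.mk.injEq, true_and, and_true]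
    omega

lemma A_card (a : ℕ) :
    ((tbox a).filter (fun p =>
      2*p.1+3*p.2.1+4*p.2.2 ≤ 2*a ∧ 2*a ≤ p.1+2*p.2.1+3*p.2.2 + a)).card =
    (Cset a).card + (Pset a).card := by
  rw [← top_card a, Cset]
  rw [← Finset.card_union_of_disjoint]
  · congr 1
    ext ⟨x, y, z⟩
    simp only [mem_union, mem_filter, mem_tbox]
    omega
  · rw [Finset.disjoint_left]
    rintro ⟨x, y, z⟩ h1 h2
    simp only [mem_filter, mem_tbox] at h1 h2
    omega

lemma bot_card (a : ℕ) :
    ((tbox a).filter (fun p => p.1+2*p.2.1+3*p.2.2 + 1 = a)).card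
      + (Rset a).card = (Pset a).card := by
  have h1 : ((tbox a).filter (fun p => p.1+2*p.2.1+3*p.2.2 + 1 = a)).card
      = ((Pset a).filter (fun p => 1 ≤ p.1)).card := by
    apply Finset.card_nbij' (fun p => (p.1 + 1, p.2.1, p.2.2))
      (fun p => (p.1 - 1, p.2.1, p.2.2))
    · rintro ⟨x, y, z⟩ hp
      simp only [mem_coe, mem_filter, mem_tbox, Pset] at hp ⊢
      omega
    · rintro ⟨x, y, z⟩ hp
      simp only [mem_coe, mem_filter, mem_tbox, Pset] at hp ⊢
      omega
    · rintro ⟨x, y, z⟩ hp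
      simp only [Prod.mk.injEq, true_and, and_true]
      omega
    · rintro ⟨x, y, z⟩ hp
      simp only [mem_coe, Pset, mem_filter, mem_tbox] at hp
      simp only [Prod.mk.injEq, true_and, and_true]
      omega
  have h2 : (Rset a).card = ((Pset a).filter (fun p => ¬ 1 ≤ p.1)).card := by
    apply Finset.card_nbij' (fun p => (0, p.1, p.2)) (fun p => (p.2.1, p.2.2))
    · rintro ⟨y, z⟩ hp
      simp only [mem_coe, mem_filter, mem_tbox, mem_product, mem_range, Pset, Rset,
        Nat.lt_succ_iff, not_le] at hp ⊢
      omega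
    · rintro ⟨x, y, z⟩ hp
      simp only [mem_coe, mem_filter, mem_tbox, mem_product, mem_range, Pset, Rset,
        Nat.lt_succ_iff, not_le] at hp ⊢
      omega
    · rintro ⟨y, z⟩ hp
      simp
    · rintro ⟨x, y, z⟩ hp
      simp only [mem_coe, Pset, mem_filter, mem_tbox, not_le] at hp
      simp only [Prod.mk.injEq, true_and, and_true]
      omega
  rw [h1, h2, Finset.card_filter_add_card_filter_not]

lemma Rset_step (b : ℕ) : (Rset (b+6)).card = (Rset b).card + 1 := by
  have hsplit := Finset.card_filter_add_card_filter_not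
    (s := Rset (b+6)) (p := fun p => 2 ≤ p.2)
  have h1 : ((Rset (b+6)).filter (fun p => 2 ≤ p.2)).card = (Rset b).card := by
    apply Finset.card_nbij' (fun p => (p.1, p.2 - 2)) (fun p => (p.1, p.2 + 2))
    · rintro ⟨y, z⟩ hp
      simp only [mem_coe, Rset, mem_filter, mem_product, mem_range, Nat.lt_succ_iff] at hp ⊢
      omega
    · rintro ⟨y, z⟩ hp
      simp only [mem_coe, Rset, mem_filter, mem_product, mem_range, Nat.lt_succ_iff] at hp ⊢
      omega
    · rintro ⟨y, z⟩ hp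
      simp only [mem_coe, Rset, mem_filter, mem_product, mem_range, Nat.lt_succ_iff] at hp
      simp only [Prod.mk.injEq, true_and, and_true]
      omega
    · rintro ⟨y, z⟩ hp
      simp only [mem_coe, Rset, mem_filter, mem_product, mem_range, Nat.lt_succ_iff] at hp
      simp only [Prod.mk.injEq, true_and, and_true]
      omega
  have h2 : ((Rset (b+6)).filter (fun p => ¬ 2 ≤ p.2)).card = 1 := by
    rw [Finset.card_eq_one]
    by_cases hb : b % 2 = 0
    · refine ⟨((b+6)/2, 0), ?_⟩
      ext ⟨y, z⟩
      simp only [Rset, mem_filter, mem_product, mem_range, Nat.lt_succ_iff,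
        mem_singleton, Prod.mk.injEq, not_le]
      omega
    · refine ⟨((b+3)/2, 1), ?_⟩
      ext ⟨y, z⟩
      simp only [Rset, mem_filter, mem_product, mem_range, Nat.lt_succ_iff,
        mem_singleton, Prod.mk.injEq, not_le]
      omega
  omega

lemma Rset_card (a : ℕ) :
    (Rset a).card = (a + 3 * (if a % 2 = 1 then 1 else 2)) / 6 := by
  induction a using Nat.strong_induction_on with
  | _ a ih =>
    by_cases h : a < 6
    · interval_cases a <;> decide
    · obtain ⟨b, rfl⟩ : ∃ b, a = b + 6 := ⟨a - 6, by omega⟩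
      rw [Rset_step, ih b (by omega)]
      have h2 : (b + 6) % 2 = b % 2 := by omega
      rw [h2]
      split_ifs <;> omega

lemma main_count (a : ℕ) (ha : 1 ≤ a) :
    Gcoeff (fun _ : Fin 4 => a) (2*a) =
      Gcoeff (fun _ : Fin 4 => a) (2*a-1) + (Rset a).card := by
  rw [gcoeff_eq, gcoeff_eq, A_card]
  have hB : ((tbox a).filter (fun p =>
        2*p.1+3*p.2.1+4*p.2.2 ≤ 2*a-1 ∧ 2*a-1 ≤ p.1+2*p.2.1+3*p.2.2 + a)).card
      = (Cset a).card + ((tbox a).filter (fun p => p.1+2*p.2.1+3*p.2.2 + 1 = a)).card := by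
    rw [Cset, ← Finset.card_union_of_disjoint]
    · congr 1
      ext ⟨x, y, z⟩
      simp only [mem_union, mem_filter, mem_tbox]
      omega
    · rw [Finset.disjoint_left]
      rintro ⟨x, y, z⟩ h1 h2
      simp only [mem_filter, mem_tbox] at h1 h2
      omega
  rw [hB]
  have := bot_card a
  omega

lemma dZ_top (a : ℕ) : dZ a (2 * (a : ℤ)) = Gcoeff (fun _ : Fin 4 => a) (2*a) := by
  have h0 : (0:ℤ) ≤ 2 * (a:ℤ) := by positivity
  have ht : (2 * (a:ℤ)).toNat = 2 * a := by omega
  rw [dZ, if_pos h0, ht, gaussCoeff]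
  simp only [Nat.add_sub_cancel]

lemma dZ_next (a : ℕ) (ha : 1 ≤ a) :
    dZ a (2 * (a : ℤ) - 1) = Gcoeff (fun _ : Fin 4 => a) (2*a-1) := by
  have h0 : (0:ℤ) ≤ 2 * (a:ℤ) - 1 := by omega
  have ht : (2 * (a:ℤ) - 1).toNat = 2 * a - 1 := by omega
  rw [dZ, if_pos h0, ht, gaussCoeff]
  simp only [Nat.add_sub_cancel]

/-- `f(a,0) = ⌊(a + 3δ)/6⌋` with `δ = 1` for `a` odd and `δ = 2` for `a` even;
in particular `f(a,0) → ∞` as `a → ∞`. -/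
theorem top_difference_formula :
    (∀ a : ℕ, (dZ a (2 * (a : ℤ)) : ℤ) - dZ a (2 * (a : ℤ) - 1) =
      ((a : ℤ) + 3 * (if a % 2 = 1 then 1 else 2)) / 6) ∧
    Filter.Tendsto (fun a : ℕ => (dZ a (2 * (a : ℤ)) : ℤ) - dZ a (2 * (a : ℤ) - 1))
      Filter.atTop Filter.atTop := by
  have hf : ∀ a : ℕ, (dZ a (2 * (a : ℤ)) : ℤ) - dZ a (2 * (a : ℤ) - 1) =
      ((a : ℤ) + 3 * (if a % 2 = 1 then 1 else 2)) / 6 := by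
    intro a
    rcases Nat.eq_zero_or_pos a with rfl | ha
    · have h1 : dZ 0 (2 * ((0:ℕ) : ℤ)) = 1 := by
        rw [dZ_top, gcoeff_eq]
        decide
      have h2 : dZ 0 (2 * ((0:ℕ) : ℤ) - 1) = 0 := by
        rw [dZ]
        norm_num
      rw [h1, h2]
      norm_num
    · rw [dZ_top, dZ_next a ha, main_count a ha, Rset_card]
      split_ifs <;> omega
  refine ⟨hf, ?_⟩
  rw [Filter.tendsto_atTop]
  intro b
  filter_upwards [Filter.eventually_ge_atTop (6 * b.natAbs + 12)] with a ha
  rw [hf a]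
  split_ifs <;> omega
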